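/- In the lower-bound construction for the 2-server problem on a path of 5 vertices with servers at vertices 2 and 4, any deterministic algorithm serving m rounds that correctly guesses the type of βm rounds incurs cost at least 4βm + 6(1−β)m = (6−2β)m, while the offline optimum pays exactly 4m; hence to achieve competitive ratio τ the algorithm must guess at least (3−2τ)m rounds correctly. -/
import Mathlib


/-- In the lower-bound construction for the 2-server problem on a path of 5
vertices: there are `m` rounds; the set `S` consists of the rounds whose type
the algorithm guesses correctly; a correctly guessed round costs (at least) `4`
and an incorrectly guessed round costs at least `6`.  If `βm` rounds are
guessed correctly, the total cost is at least `4βm + 6(1−β)m = (6−2β)m`, while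
the offline optimum pays exactly `4m`; hence if the algorithm's cost is at most
`τ·4m`, then at least `(3−2τ)m` rounds are guessed correctly. -/
theorem two_server_round_cost_bound (m : ℕ) (c : Fin m → ℝ) (S : Finset (Fin m))
    (hcorrect : ∀ i ∈ S, 4 ≤ c i) (hwrong : ∀ i ∉ S, 6 ≤ c i)
    (β τ : ℝ) (hβ : (S.card : ℝ) = β * m) :
    (4 * β * m + 6 * (1 - β) * m = (6 - 2 * β) * m) ∧
    (4 * β * m + 6 * (1 - β) * m ≤ ∑ i, c i) ∧
    ((∑ i, c i ≤ τ * (4 * m)) → (3 - 2 * τ) * m ≤ (S.card : ℝ)) := by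
  have hsplit : ∑ i, c i = ∑ i ∈ S, c i + ∑ i ∈ Sᶜ, c i :=
    (Finset.sum_add_sum_compl S c).symm
  have h1 : (4 : ℝ) * S.card ≤ ∑ i ∈ S, c i := by
    calc (4 : ℝ) * S.card = ∑ _i ∈ S, (4 : ℝ) := by
          rw [Finset.sum_const, nsmul_eq_mul, mul_comm]
      _ ≤ ∑ i ∈ S, c i := Finset.sum_le_sum hcorrect
  have h2 : (6 : ℝ) * Sᶜ.card ≤ ∑ i ∈ Sᶜ, c i := by
    calc (6 : ℝ) * Sᶜ.card = ∑ _i ∈ Sᶜ, (6 : ℝ) := by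
          rw [Finset.sum_const, nsmul_eq_mul, mul_comm]
      _ ≤ ∑ i ∈ Sᶜ, c i :=
        Finset.sum_le_sum (fun i hi => hwrong i (Finset.mem_compl.mp hi))
  have hcard : (Sᶜ.card : ℝ) = m - S.card := by
    have := Finset.card_add_card_compl S
    have : S.card + Sᶜ.card = m := by simpa using this
    have := congrArg (Nat.cast : ℕ → ℝ) this
    push_cast at this
    linarith
  have hlow : (6 : ℝ) * m - 2 * S.card ≤ ∑ i, c i := by
    rw [hsplit]; rw [hcard] at h2; linarith
  refine ⟨by ring, ?_, ?_⟩
  · calc 4 * β * m + 6 * (1 - β) * m = 6 * m - 2 * (β * m) := by ring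
      _ = 6 * m - 2 * S.card := by rw [hβ]
      _ ≤ ∑ i, c i := hlow
  · intro h
    linarith [hlow, hβ]
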